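/- Let K be a compact, perfectly normal topological space. A real-valued function f ∈ C(K) with ‖f‖ = 1 is a ρ-left symmetric point of C(K) if and only if for every k ∈ K, |f(k)| < 1 implies f(k) = 0. -/

import Mathlib

open Filter Topology Set Metric NormedSpace

set_option linter.unusedSectionVars false
set_option maxHeartbeats 1000000
noncomputable section

/-- Birkhoff–James orthogonality: `x ⊥_B y` iff `‖x + t • y‖ ≥ ‖x‖` for all real `t`. -/
def BJOrth {E : Type*} [NormedAddCommGroup E] [NormedSpace ℝ E] (x y : E) : Prop :=
  ∀ t : ℝ, ‖x‖ ≤ ‖x + t • y‖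

/-- The norm derivative `ρ'₊(x,y) = ‖x‖ · lim_{t→0⁺} (‖x+ty‖-‖x‖)/t`. -/
def rhoPlus {E : Type*} [NormedAddCommGroup E] [NormedSpace ℝ E] (x y : E) : ℝ :=
  ‖x‖ * limUnder (𝓝[>] (0 : ℝ)) (fun t => (‖x + t • y‖ - ‖x‖) / t)

/-- The norm derivative `ρ'₋(x,y) = ‖x‖ · lim_{t→0⁻} (‖x+ty‖-‖x‖)/t`. -/
def rhoMinus {E : Type*} [NormedAddCommGroup E] [NormedSpace ℝ E] (x y : E) : ℝ :=
  ‖x‖ * limUnder (𝓝[<] (0 : ℝ)) (fun t => (‖x + t • y‖ - ‖x‖) / t)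

/-- The norm derivative `ρ'(x,y) = (ρ'₊(x,y) + ρ'₋(x,y))/2`. -/
def rhoDer {E : Type*} [NormedAddCommGroup E] [NormedSpace ℝ E] (x y : E) : ℝ :=
  (rhoPlus x y + rhoMinus x y) / 2

/-- `x` is an exposed point of the closed unit ball of `E`: there is a norm-one functional `f`
with `f x = 1` and `f u < 1` for every `u` in the ball with `u ≠ x`. -/
def ExposedPt {E : Type*} [NormedAddCommGroup E] [NormedSpace ℝ E] (x : E) : Prop :=
  ‖x‖ ≤ 1 ∧ ∃ f : E →L[ℝ] ℝ, ‖f‖ = 1 ∧ f x = 1 ∧ ∀ u : E, ‖u‖ ≤ 1 → u ≠ x → f u < 1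

section Aux
variable {K : Type*} [TopologicalSpace K] [CompactSpace K]

lemma apply_eval (f g : C(K,ℝ)) (t : ℝ) (k : K) : (f + t • g) k = f k + t * g k := by
  simp

lemma tendstoQ (f g : C(K, ℝ)) (hf0 : 0 < ‖f‖) (k₀ : K) (hk₀ : |f k₀| = ‖f‖)
    (hmax : ∀ k, |f k| = ‖f‖ → f k * g k ≤ f k₀ * g k₀) :
    Tendsto (fun t : ℝ => (‖f + t • g‖ - ‖f‖) / t) (𝓝[>] 0)
      (𝓝 (f k₀ * g k₀ / ‖f‖)) := by
  set F := ‖f‖ with hF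
  set G := ‖g‖ with hG
  set c := f k₀ * g k₀ / F with hc
  have hGnn : 0 ≤ G := norm_nonneg g
  have hcF : c * F = f k₀ * g k₀ := by rw [hc, div_mul_cancel₀ _ hf0.ne']
  have hfb : ∀ k, |f k| ≤ F := fun k => by
    simpa [Real.norm_eq_abs] using f.norm_coe_le_norm k
  have hgb : ∀ k, |g k| ≤ G := fun k => by
    simpa [Real.norm_eq_abs] using g.norm_coe_le_norm k
  -- lower bound
  have lower : ∀ t : ℝ, 0 < t → c ≤ (‖f + t • g‖ - F) / t := by
    intro t ht
    have h1 : f k₀ * (f k₀ + t * g k₀) ≤ F * |f k₀ + t * g k₀| := by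
      rw [← hk₀, ← abs_mul]; exact le_abs_self _
    have h2 : |f k₀ + t * g k₀| ≤ ‖f + t • g‖ := by
      have := (f + t • g).norm_coe_le_norm k₀
      simpa [Real.norm_eq_abs, apply_eval] using this
    have h3 : F + t * c ≤ ‖f + t • g‖ := by
      nlinarith [sq_abs (f k₀), abs_nonneg (f k₀ + t * g k₀)]
    rw [le_div_iff₀ ht]; linarith
  -- upper bound
  have upper : ∀ ε : ℝ, 0 < ε → ∃ δ > 0, ∀ t : ℝ, 0 < t → t < δ →
      (‖f + t • g‖ - F) / t ≤ c + ε := by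
    intro ε hε
    set W : Set K := {k | F/2 < |f k| ∧ f k * g k < c*F + ε/2*F} with hW
    have hWopen : IsOpen W := by
      have h1 : IsOpen {k | F/2 < |f k|} :=
        isOpen_lt continuous_const (continuous_abs.comp f.continuous)
      have h2 : IsOpen {k | f k * g k < c*F + ε/2*F} :=
        isOpen_lt (f.continuous.mul g.continuous) continuous_const
      exact h1.inter h2
    have hMW : ∀ k, |f k| = F → k ∈ W := by
      intro k hk
      refine ⟨by rw [hk]; linarith, ?_⟩
      have := hmax k hk
      nlinarith
    obtain ⟨m, hmF, hm⟩ : ∃ m, m < F ∧ ∀ k, k ∉ W → |f k| ≤ m := by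
      rcases eq_empty_or_nonempty Wᶜ with hWe | ⟨k₁, hk₁⟩
      · exact ⟨0, hf0, fun k hk => absurd (show k ∈ Wᶜ from hk)
          (by rw [hWe]; exact notMem_empty k)⟩
      · have hcomp : IsCompact (Wᶜ) := (hWopen.isClosed_compl).isCompact
        obtain ⟨k₂, hk₂W, hk₂max⟩ := hcomp.exists_isMaxOn ⟨k₁, hk₁⟩
          ((continuous_abs.comp f.continuous).continuousOn)
        refine ⟨|f k₂|, ?_, fun k hk => hk₂max hk⟩
        rcases lt_or_eq_of_le (hfb k₂) with h | h
        · exact h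
        · exact absurd (hMW k₂ h) hk₂W
    set A := |c + ε| with hA
    have hAnn : 0 ≤ A := abs_nonneg _
    have hd1 : 0 < (F - m)/(G + A + 1) := div_pos (by linarith) (by positivity)
    have hd2 : 0 < ε*F/(G^2+1) := div_pos (mul_pos hε hf0) (by positivity)
    have hd3 : 0 < F/(2*(A+1)) := div_pos hf0 (by positivity)
    refine ⟨min (min ((F - m)/(G + A + 1)) (ε*F/(G^2+1))) (F/(2*(A+1))),
      lt_min (lt_min hd1 hd2) hd3, fun t ht htδ => ?_⟩
    have ht1 : t * (G + A + 1) < F - m := by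
      have h := lt_of_lt_of_le htδ (le_trans (min_le_left _ _) (min_le_left _ _))
      rw [lt_div_iff₀ (by positivity)] at h; linarith
    have ht2 : t * (G^2+1) < ε*F := by
      have h := lt_of_lt_of_le htδ (le_trans (min_le_left _ _) (min_le_right _ _))
      rw [lt_div_iff₀ (by positivity)] at h; linarith
    have ht3 : t * (A+1) < F/2 := by
      have h := lt_of_lt_of_le htδ (min_le_right _ _)
      rw [lt_div_iff₀ (by positivity)] at h; linarith
    have hB : (0:ℝ) ≤ F + t*(c+ε) := by
      have := neg_abs_le (c + ε)
      nlinarith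
    have key : ‖f + t • g‖ ≤ F + t*(c+ε) := by
      rw [(f + t • g).norm_le hB]
      intro k
      rw [Real.norm_eq_abs, apply_eval]
      by_cases hkW : k ∈ W
      · obtain ⟨hk1, hk2⟩ := hkW
        have hfk : f k ^2 ≤ F^2 := by nlinarith [hfb k, abs_nonneg (f k), sq_abs (f k)]
        have hgk : g k ^2 ≤ G^2 := by nlinarith [hgb k, abs_nonneg (g k), sq_abs (g k)]
        have hsq : (f k + t*g k)^2 ≤ (F + t*(c+ε))^2 := by
          nlinarith [mul_lt_mul_of_pos_left hk2 ht, mul_lt_mul_of_pos_left ht2 ht,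
            mul_le_mul_of_nonneg_left hgk (mul_nonneg ht.le ht.le),
            mul_nonneg (mul_nonneg ht.le ht.le) (sq_nonneg (c+ε)), mul_pos ht ht]
        nlinarith [sq_abs (f k + t*g k), abs_nonneg (f k + t*g k), hsq, hB]
      · have h1 : |f k| ≤ m := hm k hkW
        have h2 : |g k| ≤ G := hgb k
        have h3 : |f k + t*g k| ≤ |f k| + t*|g k| := by
          calc |f k + t*g k| ≤ |f k| + |t*g k| := abs_add_le _ _
          _ = |f k| + t*|g k| := by rw [abs_mul, abs_of_pos ht]
        have h4 : -(c+ε) ≤ A := neg_le_abs _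
        nlinarith [mul_le_mul_of_nonneg_left h2 ht.le, mul_le_mul_of_nonneg_left h4 ht.le]
    rw [div_le_iff₀ ht]; linarith
  -- conclude
  rw [Metric.tendsto_nhds]
  intro ε hε
  obtain ⟨δ, hδ, hup⟩ := upper (ε/2) (half_pos hε)
  filter_upwards [Ioo_mem_nhdsGT_of_mem (⟨le_refl (0:ℝ), hδ⟩ : (0:ℝ) ∈ Ico (0:ℝ) δ)]
    with t ht
  have h1 := lower t ht.1
  have h2 := hup t ht.1 ht.2
  rw [Real.dist_eq, abs_sub_lt_iff]
  constructor <;> linarith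
lemma exists_norm_attain [Nonempty K] (f : C(K,ℝ)) : ∃ k, |f k| = ‖f‖ := by
  obtain ⟨k₁, -, hk₁⟩ := isCompact_univ.exists_isMaxOn univ_nonempty
    ((continuous_abs.comp f.continuous).continuousOn)
  refine ⟨k₁, le_antisymm ?_ ?_⟩
  · simpa [Real.norm_eq_abs] using f.norm_coe_le_norm k₁
  · exact (f.norm_le (abs_nonneg _)).2 fun k => by
      simpa [Real.norm_eq_abs] using hk₁ (mem_univ k)

lemma rhoPlus_eq (f g : C(K, ℝ)) (hf0 : 0 < ‖f‖) (k₀ : K) (hk₀ : |f k₀| = ‖f‖)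
    (hmax : ∀ k, |f k| = ‖f‖ → f k * g k ≤ f k₀ * g k₀) :
    rhoPlus f g = f k₀ * g k₀ := by
  rw [rhoPlus, (tendstoQ f g hf0 k₀ hk₀ hmax).limUnder_eq]
  field_simp

lemma rhoMinus_eq (f g : C(K, ℝ)) (hf0 : 0 < ‖f‖) (k₀ : K) (hk₀ : |f k₀| = ‖f‖)
    (hmin : ∀ k, |f k| = ‖f‖ → f k₀ * g k₀ ≤ f k * g k) :
    rhoMinus f g = f k₀ * g k₀ := by
  have hmax' : ∀ k, |f k| = ‖f‖ → f k * (-g) k ≤ f k₀ * (-g) k₀ := by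
    intro k hk
    simp only [ContinuousMap.neg_apply, mul_neg, neg_le_neg_iff]
    exact hmin k hk
  have h1 := tendstoQ f (-g) hf0 k₀ hk₀ hmax'
  have hneg : Tendsto (fun t : ℝ => -t) (𝓝[<] (0:ℝ)) (𝓝[>] (0:ℝ)) := by
    have ha : Tendsto (fun t : ℝ => -t) (𝓝 (0:ℝ)) (𝓝 (0:ℝ)) := by
      simpa using (continuous_neg.tendsto (0:ℝ))
    have hb : Tendsto (fun t : ℝ => -t) (𝓟 (Iio (0:ℝ))) (𝓟 (Ioi (0:ℝ))) :=
      tendsto_principal_principal.2 fun x hx => by simpa using hx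
    rw [nhdsWithin, nhdsWithin]
    exact ha.inf hb
  have h2 := (h1.comp hneg).neg
  have heq : (fun t : ℝ => -((fun s : ℝ => (‖f + s • (-g)‖ - ‖f‖) / s) (-t)))
      = fun t : ℝ => (‖f + t • g‖ - ‖f‖) / t := by
    funext t
    simp only [neg_smul, smul_neg, neg_neg]
    ring
  rw [Function.comp_def] at h2
  rw [heq] at h2
  rw [rhoMinus, h2.limUnder_eq]
  have : -(f k₀ * (-g) k₀ / ‖f‖) = f k₀ * g k₀ / ‖f‖ := by
    simp only [ContinuousMap.neg_apply, mul_neg, neg_neg, neg_div]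
  rw [this]
  field_simp
end Aux

theorem stmt18 {K : Type*} [TopologicalSpace K] [CompactSpace K] [T2Space K]
    [PerfectlyNormalSpace K]
    (f : C(K, ℝ)) (hf : ‖f‖ = 1) :
    (∀ g : C(K, ℝ), rhoDer f g = 0 → rhoDer g f = 0) ↔
      (∀ k : K, |f k| < 1 → f k = 0) := by
  have hf0 : (0:ℝ) < ‖f‖ := by rw [hf]; norm_num
  have hK : Nonempty K := by
    by_contra h
    rw [not_nonempty_iff] at h
    have hz : f = 0 := by ext k; exact h.elim k
    rw [hz, norm_zero] at hf; norm_num at hf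
  have hfb : ∀ k, |f k| ≤ 1 := fun k => by
    have := f.norm_coe_le_norm k; rw [hf] at this
    simpa [Real.norm_eq_abs] using this
  constructor
  · -- left-symmetric → condition
    intro hsym k₀ hk₀lt
    by_contra hk₀ne
    set M : Set K := {k | |f k| = 1} with hM
    have hMclosed : IsClosed M :=
      isClosed_eq (continuous_abs.comp f.continuous) continuous_const
    have hk₀M : k₀ ∉ M := fun h => absurd (h : |f k₀| = 1) (ne_of_lt hk₀lt)
    have hGδ : IsGδ ({k₀} : Set K) :=
      PerfectlyNormalSpace.closed_gdelta isClosed_singleton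
    obtain ⟨g, hg1, hg0, -, hgIcc⟩ := exists_continuous_one_zero_of_isCompact_of_isGδ
      isCompact_singleton hGδ hMclosed (by simpa [disjoint_singleton_left] using hk₀M)
    have hgk₀ : g k₀ = 1 := by
      have : k₀ ∈ g ⁻¹' {1} := by rw [← hg1]; exact rfl
      simpa using this
    have hgnorm : ‖g‖ = 1 := by
      refine le_antisymm ((g.norm_le zero_le_one).2 fun k => ?_) ?_
      · have := hgIcc k
        rw [Real.norm_eq_abs, abs_of_nonneg this.1]
        exact this.2
      · have := g.norm_coe_le_norm k₀
        rw [hgk₀] at this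
        simpa using this
    have hMg : ∀ k, |g k| = ‖g‖ → k = k₀ := by
      intro k hk
      rw [hgnorm] at hk
      have h1 : g k = 1 := by
        have := hgIcc k
        rw [abs_of_nonneg this.1] at hk
        exact hk
      have : k ∈ g ⁻¹' {1} := by simpa using h1
      rw [← hg1] at this
      simpa using this
    obtain ⟨kM, hkM⟩ := exists_norm_attain f
    have hfg0 : ∀ k, |f k| = ‖f‖ → f k * g k = 0 := by
      intro k hk
      have hkMem : k ∈ M := by rw [hf] at hk; exact hk
      have : g k = 0 := hg0 hkMem
      rw [this, mul_zero]
    have h1 : rhoPlus f g = 0 := by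
      rw [rhoPlus_eq f g hf0 kM hkM (fun k hk => by rw [hfg0 k hk, hfg0 kM hkM])]
      exact hfg0 kM hkM
    have h2 : rhoMinus f g = 0 := by
      rw [rhoMinus_eq f g hf0 kM hkM (fun k hk => by rw [hfg0 k hk, hfg0 kM hkM])]
      exact hfg0 kM hkM
    have hder : rhoDer f g = 0 := by rw [rhoDer, h1, h2]; norm_num
    have hres := hsym g hder
    have hg0' : (0:ℝ) < ‖g‖ := by rw [hgnorm]; norm_num
    have hk₀g : |g k₀| = ‖g‖ := by rw [hgnorm, hgk₀]; norm_num
    have hPlus : rhoPlus g f = g k₀ * f k₀ :=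
      rhoPlus_eq g f hg0' k₀ hk₀g (fun k hk => by rw [hMg k hk])
    have hMinus : rhoMinus g f = g k₀ * f k₀ :=
      rhoMinus_eq g f hg0' k₀ hk₀g (fun k hk => by rw [hMg k hk])
    rw [rhoDer, hPlus, hMinus, hgk₀, one_mul] at hres
    apply hk₀ne
    linarith
  · -- condition → left-symmetric
    intro hcond g hg
    by_cases hgz : g = 0
    · rw [hgz, rhoDer, rhoPlus, rhoMinus]
      simp
    · have hgn : (0:ℝ) < ‖g‖ := norm_pos_iff.mpr hgz
      have hgb : ∀ k, |g k| ≤ ‖g‖ := fun k => by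
        simpa [Real.norm_eq_abs] using g.norm_coe_le_norm k
      set M : Set K := {k | |f k| = ‖f‖} with hM
      have hMclosed : IsClosed M :=
        isClosed_eq (continuous_abs.comp f.continuous) continuous_const
      obtain ⟨kM, hkM⟩ := exists_norm_attain f
      obtain ⟨kp, hkpM, hkpmax⟩ := (hMclosed.isCompact).exists_isMaxOn ⟨kM, hkM⟩
        ((f.continuous.mul g.continuous).continuousOn)
      obtain ⟨km, hkmM, hkmmin⟩ := (hMclosed.isCompact).exists_isMinOn ⟨kM, hkM⟩
        ((f.continuous.mul g.continuous).continuousOn)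
      have hPf := rhoPlus_eq f g hf0 kp hkpM (fun k hk => hkpmax hk)
      have hMf := rhoMinus_eq f g hf0 km hkmM (fun k hk => hkmmin hk)
      rw [rhoDer, hPf, hMf] at hg
      have hgsum : f kp * g kp + f km * g km = 0 := by linarith
      set N : Set K := {k | |g k| = ‖g‖} with hN
      have hNclosed : IsClosed N :=
        isClosed_eq (continuous_abs.comp g.continuous) continuous_const
      obtain ⟨kN, hkN⟩ := exists_norm_attain g
      obtain ⟨pp, hppN, hppmax⟩ := (hNclosed.isCompact).exists_isMaxOn ⟨kN, hkN⟩
        ((g.continuous.mul f.continuous).continuousOn)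
      obtain ⟨pm, hpmN, hpmmin⟩ := (hNclosed.isCompact).exists_isMinOn ⟨kN, hkN⟩
        ((g.continuous.mul f.continuous).continuousOn)
      have hPg := rhoPlus_eq g f hgn pp hppN (fun k hk => hppmax hk)
      have hMg := rhoMinus_eq g f hgn pm hpmN (fun k hk => hpmmin hk)
      rw [rhoDer, hPg, hMg]
      -- combinatorial part
      have hbound : ∀ k : K, |f k * g k| ≤ ‖g‖ := by
        intro k
        rw [abs_mul]
        calc |f k| * |g k| ≤ 1 * ‖g‖ :=
          mul_le_mul (hfb k) (hgb k) (abs_nonneg _) zero_le_one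
        _ = ‖g‖ := one_mul _
      have hfval : ∀ k : K, f k = 0 ∨ |f k| = 1 := by
        intro k
        rcases lt_or_eq_of_le (hfb k) with h | h
        · exact Or.inl (hcond k h)
        · exact Or.inr h
      -- key: points in N with nonzero product are in M with product ±‖g‖
      have hNpos : ∀ k, k ∈ N → 0 < f k * g k → (k ∈ M ∧ f k * g k = ‖g‖) := by
        intro k hkN' hpos
        have hfk1 : |f k| = 1 := by
          rcases hfval k with h | h
          · rw [h, zero_mul] at hpos; exact absurd hpos (lt_irrefl 0)
          · exact h
        refine ⟨by rw [hM, mem_setOf_eq, hf]; exact hfk1, ?_⟩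
        have : |f k * g k| = ‖g‖ := by
          rw [abs_mul, hfk1, one_mul]; exact hkN'
        rw [abs_of_pos hpos] at this
        exact this
      have hNneg : ∀ k, k ∈ N → f k * g k < 0 → (k ∈ M ∧ f k * g k = -‖g‖) := by
        intro k hkN' hneg
        have hfk1 : |f k| = 1 := by
          rcases hfval k with h | h
          · rw [h, zero_mul] at hneg; exact absurd hneg (lt_irrefl 0)
          · exact h
        refine ⟨by rw [hM, mem_setOf_eq, hf]; exact hfk1, ?_⟩
        have : |f k * g k| = ‖g‖ := by
          rw [abs_mul, hfk1, one_mul]; exact hkN'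
        rw [abs_of_neg hneg] at this
        linarith
      -- products equal to ±‖g‖ force membership in N
      have hMtoN : ∀ k, f k * g k = ‖g‖ ∨ f k * g k = -‖g‖ → k ∈ N := by
        intro k hk
        have h1 : |f k * g k| = ‖g‖ := by
          rcases hk with h | h <;> rw [h] <;> simp [abs_of_pos hgn, abs_of_neg, hgn.le]
        rw [abs_mul] at h1
        have h2 : |g k| ≤ ‖g‖ := hgb k
        have h3 : |f k| ≤ 1 := hfb k
        have : |g k| = ‖g‖ := by
          nlinarith [abs_nonneg (f k), abs_nonneg (g k)]
        exact this
      have hb1 : g pm * f pm ≤ g pp * f pp := hppmax hpmN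
      -- goal: (g pp * f pp + g pm * f pm)/2 = 0
      have claim1 : g pp * f pp + g pm * f pm ≤ 0 := by
        rcases le_or_gt (g pp * f pp) 0 with h | h
        · linarith
        · have h' : 0 < f pp * g pp := by linarith [mul_comm (g pp) (f pp)]
          obtain ⟨hppM, hppval⟩ := hNpos pp hppN (by linarith [mul_comm (g pp) (f pp), h])
          have ha1 : f pp * g pp ≤ f kp * g kp := hkpmax hppM
          have ha2 : f kp * g kp ≤ ‖g‖ := le_trans (le_abs_self _) (hbound kp)
          have ha3 : f kp * g kp = ‖g‖ := by rw [hppval] at ha1; linarith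
          have ha4 : f km * g km = -‖g‖ := by rw [ha3] at hgsum; linarith
          have hkmN : km ∈ N := hMtoN km (Or.inr ha4)
          have hb2 : g pm * f pm ≤ g km * f km := hpmmin hkmN
          have : g km * f km = -‖g‖ := by rw [mul_comm]; exact ha4
          have hgf : g pp * f pp = ‖g‖ := by rw [mul_comm]; exact hppval
          linarith
      have claim2 : 0 ≤ g pp * f pp + g pm * f pm := by
        rcases le_or_gt 0 (g pm * f pm) with h | h
        · linarith
        · have h' : f pm * g pm < 0 := by
            rw [mul_comm]; exact h
          obtain ⟨hpmM, hpmval⟩ := hNneg pm hpmN h'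
          have ha1 : f km * g km ≤ f pm * g pm := hkmmin hpmM
          have ha2 : -‖g‖ ≤ f km * g km := by
            have := hbound km
            rw [abs_le] at this; exact this.1
          have ha3 : f km * g km = -‖g‖ := by rw [hpmval] at ha1; linarith
          have ha4 : f kp * g kp = ‖g‖ := by rw [ha3] at hgsum; linarith
          have hkpN : kp ∈ N := hMtoN kp (Or.inl ha4)
          have hb2 : g kp * f kp ≤ g pp * f pp := hppmax hkpN
          have : g kp * f kp = ‖g‖ := by rw [mul_comm]; exact ha4
          have hpm' : g pm * f pm = -‖g‖ := by rw [mul_comm]; exact hpmval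
          rw [hpm']
          linarith
      linarith
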